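/- Completeness of AX^b for rooted branching bisimilarity on the minimal process language: for all processes E, F, E ≈_rb F if and only if the axioms A1–A4 and B prove E = F. -/

import Mathlib

namespace NDB

/-- The minimal process language `E ::= 0 | α.E | E + E`. -/
inductive NE (Act : Type) : Type where
  | zero : NE Act
  | pre : Act → NE Act → NE Act
  | plus : NE Act → NE Act → NE Act

variable {Act : Type}

/-- The SOS transition relation. -/
inductive step : NE Act → Act → NE Act → Prop where
  | pre (α : Act) (E : NE Act) : step (.pre α E) α E
  | left {E₁ E₂ : NE Act} {α : Act} {E' : NE Act} :
      step E₁ α E' → step (.plus E₁ E₂) α E'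
  | right {E₁ E₂ : NE Act} {α : Act} {E' : NE Act} :
      step E₂ α E' → step (.plus E₁ E₂) α E'

variable (τ : Act)

/-- `E →(α) E'` : a transition, or a vacuous step when `α = τ`. -/
def opt (E : NE Act) (α : Act) (E' : NE Act) : Prop :=
  step E α E' ∨ (α = τ ∧ E' = E)

/-- `E ⟹ E'` : the reflexive-transitive closure of `→(τ)`. -/
def wk : NE Act → NE Act → Prop :=
  Relation.ReflTransGen (fun E E' => opt τ E τ E')

/-- Branching bisimulation relations. -/
def IsBB (R : NE Act → NE Act → Prop) : Prop :=
  Symmetric R ∧ ∀ E F α E', R E F → step E α E' →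
    ∃ F₁ F₂, wk τ F F₁ ∧ opt τ F₁ α F₂ ∧ R E F₁ ∧ R E' F₂

/-- Branching bisimilarity `≈_b`. -/
def bb (E F : NE Act) : Prop := ∃ R, IsBB τ R ∧ R E F

/-- Rooted branching bisimilarity `≈_rb`. -/
def rbb (E F : NE Act) : Prop :=
  (∀ α E', step E α E' → ∃ F', step F α F' ∧ bb τ E' F') ∧
  (∀ α F', step F α F' → ∃ E', step E α E' ∧ bb τ E' F')

/-- Strong bisimulation relations. -/
def IsSB (R : NE Act → NE Act → Prop) : Prop :=
  Symmetric R ∧ ∀ E F α E', R E F → step E α E' →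
    ∃ F', step F α F' ∧ R E' F'

/-- Strong bisimilarity `∼`. -/
def sb (E F : NE Act) : Prop := ∃ R, IsSB R ∧ R E F

/-- `reach E E'` : `E'` is a derivative of `E`. -/
def reach : NE Act → NE Act → Prop :=
  Relation.ReflTransGen (fun E E' => ∃ α, step E α E')

/-- A process is concrete iff no derivative has an inert `τ`-transition. -/
def Concrete (E : NE Act) : Prop :=
  ∀ E', reach E E' → ∀ E'', step E' τ E'' → ¬ bb τ E' E''

/-- Provable equality in the theory `AX^b` (axioms A1–A4 and B). -/
inductive AXb (τ : Act) : NE Act → NE Act → Prop where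
  | refl (E) : AXb τ E E
  | symm {E F} : AXb τ E F → AXb τ F E
  | trans {E F G} : AXb τ E F → AXb τ F G → AXb τ E G
  | congPre (α : Act) {E F} : AXb τ E F → AXb τ (.pre α E) (.pre α F)
  | congPlusL {E E' F} : AXb τ E E' → AXb τ (.plus E F) (.plus E' F)
  | congPlusR {E F F'} : AXb τ F F' → AXb τ (.plus E F) (.plus E F')
  | A1 (E F) : AXb τ (.plus E F) (.plus F E)
  | A2 (E F G) : AXb τ (.plus (.plus E F) G) (.plus E (.plus F G))
  | A3 (E) : AXb τ (.plus E E) E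
  | A4 (E) : AXb τ (.plus E .zero) E
  | B (α : Act) (E F) :
      AXb τ (.pre α (.plus F (.pre τ (.plus E F)))) (.pre α (.plus E F))


/-! ### Auxiliary development -/

section Aux

open Relation

variable {τ : Act}

/-! #### Basic facts about branching bisimilarity -/

theorem bb_refl (E : NE Act) : bb τ E E := by
  refine ⟨Eq, ⟨fun _ _ h => h.symm, ?_⟩, rfl⟩
  rintro E F α E' rfl h
  exact ⟨E, E', ReflTransGen.refl, Or.inl h, rfl, rfl⟩

theorem bb_symm {E F : NE Act} (h : bb τ E F) : bb τ F E := by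
  obtain ⟨R, hR, hEF⟩ := h
  exact ⟨R, hR, hR.1 hEF⟩

theorem bb_step {E F : NE Act} {α E'} (h : bb τ E F) (hs : step E α E') :
    ∃ F₁ F₂, wk τ F F₁ ∧ opt τ F₁ α F₂ ∧ bb τ E F₁ ∧ bb τ E' F₂ := by
  obtain ⟨R, hR, hEF⟩ := h
  obtain ⟨F₁, F₂, h1, h2, h3, h4⟩ := hR.2 E F α E' hEF hs
  exact ⟨F₁, F₂, h1, h2, ⟨R, hR, h3⟩, ⟨R, hR, h4⟩⟩

/-- `bb` transfers `τ`-sequences. -/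
theorem bb_wk {X Y X' : NE Act} (h : bb τ X Y) (hw : wk τ X X') :
    ∃ Y', wk τ Y Y' ∧ bb τ X' Y' := by
  induction hw with
  | refl => exact ⟨Y, ReflTransGen.refl, h⟩
  | tail _ hopt ih =>
    obtain ⟨Y'', hwY, hbb⟩ := ih
    rcases hopt with hstep | ⟨-, rfl⟩
    · obtain ⟨Y₁, Y₂, w1, w2, -, h4⟩ := bb_step hbb hstep
      exact ⟨Y₂, (hwY.trans w1).tail w2, h4⟩
    · exact ⟨Y'', hwY, hbb⟩

theorem bb_trans {E G F : NE Act} (h1 : bb τ E G) (h2 : bb τ G F) : bb τ E F := by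
  refine ⟨fun X Y => ∃ Z, bb τ X Z ∧ bb τ Z Y, ⟨?_, ?_⟩, G, h1, h2⟩
  · rintro X Y ⟨Z, a, b⟩; exact ⟨Z, bb_symm b, bb_symm a⟩
  · rintro X Y α X' ⟨Z, hXZ, hZY⟩ hs
    obtain ⟨Z₁, Z₂, w1, o1, hXZ1, hX'Z2⟩ := bb_step hXZ hs
    obtain ⟨Y₀, wY0, hZ1Y0⟩ := bb_wk hZY w1
    rcases o1 with hstep | ⟨rfl, heq⟩
    · obtain ⟨Y₁, Y₂, w2, o2, hZ1Y1, hZ2Y2⟩ := bb_step hZ1Y0 hstep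
      exact ⟨Y₁, Y₂, wY0.trans w2, o2, ⟨Z₁, hXZ1, hZ1Y1⟩, ⟨Z₂, hX'Z2, hZ2Y2⟩⟩
    · exact ⟨Y₀, Y₀, wY0, Or.inr ⟨rfl, rfl⟩, ⟨Z₁, hXZ1, hZ1Y0⟩, ⟨Z₁, heq ▸ hX'Z2, hZ1Y0⟩⟩

/-- The stuttering lemma. -/
theorem bb_stutter {Y C s C'' : NE Act} (h1 : bb τ Y C) (w1 : wk τ C s) (w2 : wk τ s C'')
    (h2 : bb τ Y C'') : bb τ Y s := by
  refine ⟨fun X Z => bb τ X Z ∨ (∃ P Q, wk τ P Z ∧ wk τ Z Q ∧ bb τ X P ∧ bb τ X Q)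
      ∨ (∃ P Q, wk τ P X ∧ wk τ X Q ∧ bb τ Z P ∧ bb τ Z Q), ⟨?_, ?_⟩,
    Or.inr (Or.inl ⟨C, C'', w1, w2, h1, h2⟩)⟩
  · rintro X Z (h | h | h)
    · exact Or.inl (bb_symm h)
    · exact Or.inr (Or.inr h)
    · exact Or.inr (Or.inl h)
  · rintro X Z α X' (h | ⟨P, Q, wP, wQ, hP, hQ⟩ | ⟨P, Q, wP, wQ, hP, hQ⟩) hs
    · obtain ⟨F₁, F₂, a, b, c, d⟩ := bb_step h hs
      exact ⟨F₁, F₂, a, b, Or.inl c, Or.inl d⟩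
    · obtain ⟨F₁, F₂, a, b, c, d⟩ := bb_step hQ hs
      exact ⟨F₁, F₂, wQ.trans a, b, Or.inl c, Or.inl d⟩
    · obtain ⟨Z₀, wZ0, hXZ0⟩ := bb_wk (bb_symm hP) wP
      obtain ⟨F₁, F₂, a, b, c, d⟩ := bb_step hXZ0 hs
      exact ⟨F₁, F₂, wZ0.trans a, b, Or.inl c, Or.inl d⟩

/-! #### Concrete processes -/

theorem concrete_reach {E E' : NE Act} (h : Concrete τ E) (hr : reach E E') : Concrete τ E' :=
  fun X hX => h X (hr.trans hX)

theorem concrete_step {E : NE Act} {α E'} (h : Concrete τ E) (hs : step E α E') :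
    Concrete τ E' :=
  concrete_reach h (ReflTransGen.single ⟨α, hs⟩)

/-- A `τ`-sequence from a concrete process, ending branching-bisimilar to a common
anchor, cannot move. -/
theorem wk_concrete_eq {Y K K₁ : NE Act} (hw : wk τ K K₁) (h2 : bb τ Y K₁)
    (hC : Concrete τ K) (hYK : bb τ Y K) : K₁ = K := by
  revert hC hYK
  induction hw using Relation.ReflTransGen.head_induction_on with
  | refl => intro _ _; rfl
  | @head a c hac hcb ih =>
    intro hC hYK
    rcases hac with hstep | ⟨-, rfl⟩
    · exfalso
      have hYc : bb τ Y c :=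
        bb_stutter hYK (ReflTransGen.single (Or.inl hstep)) hcb h2
      exact hC a ReflTransGen.refl c hstep (bb_trans (bb_symm hYK) hYc)
    · exact ih hC hYK

/-- On concrete processes, branching bisimilarity implies strong bisimilarity. -/
theorem bb_concrete_sb {E F : NE Act} (hE : Concrete τ E) (hF : Concrete τ F)
    (h : bb τ E F) : sb E F := by
  refine ⟨fun X Y => bb τ X Y ∧ Concrete τ X ∧ Concrete τ Y, ⟨?_, ?_⟩, h, hE, hF⟩
  · rintro X Y ⟨a, b, c⟩; exact ⟨bb_symm a, c, b⟩
  · rintro X Y α X' ⟨hXY, hCX, hCY⟩ hs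
    obtain ⟨F₁, F₂, w, o, h1, h2⟩ := bb_step hXY hs
    have hF1 : F₁ = Y := wk_concrete_eq w h1 hCY hXY
    subst hF1
    rcases o with hstep | ⟨rfl, rfl⟩
    · exact ⟨F₂, hstep, h2, concrete_step hCX hs, concrete_step hCY hstep⟩
    · exact absurd (bb_trans hXY (bb_symm h2)) (hCX X ReflTransGen.refl X' hs)

/-! #### Syntactic sums -/

/-- A size measure on processes. -/
def size : NE Act → ℕ
  | .zero => 1
  | .pre _ E => size E + 1
  | .plus E F => size E + size F + 1

theorem size_pos (E : NE Act) : 1 ≤ size E := by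
  cases E <;> simp [size]

theorem step_size {E : NE Act} {α E'} (h : step E α E') : size E' < size E := by
  induction h with
  | pre => simp [size]
  | left _ ih => simp only [size]; omega
  | right _ ih => simp only [size]; omega

/-- Sum of a list of processes. -/
def listSum : List (NE Act) → NE Act
  | [] => .zero
  | x :: l => .plus x (listSum l)

/-- The list of syntactic summands. -/
def sml : NE Act → List (NE Act)
  | .zero => []
  | .pre α E => [.pre α E]
  | .plus E F => sml E ++ sml F

theorem AXb.plus_congr {E E' F F' : NE Act} (h1 : AXb τ E E') (h2 : AXb τ F F') :
    AXb τ (.plus E F) (.plus E' F') :=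
  (AXb.congPlusL h1).trans (AXb.congPlusR h2)

theorem listSum_append (l₁ l₂ : List (NE Act)) :
    AXb τ (listSum (l₁ ++ l₂)) (.plus (listSum l₁) (listSum l₂)) := by
  induction l₁ with
  | nil =>
    exact (AXb.symm ((AXb.A1 _ _).trans (AXb.A4 _)))
  | cons x l ih =>
    exact (AXb.congPlusR ih).trans (AXb.symm (AXb.A2 _ _ _))

theorem sml_eq (E : NE Act) : AXb τ E (listSum (sml E)) := by
  induction E with
  | zero => exact AXb.refl _
  | pre α E => exact AXb.symm (AXb.A4 _)
  | plus E F ihE ihF =>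
    exact (AXb.plus_congr ihE ihF).trans (AXb.symm (listSum_append _ _))

theorem step_iff_mem {E : NE Act} {α : Act} {E' : NE Act} :
    step E α E' ↔ NE.pre α E' ∈ sml E := by
  induction E with
  | zero => simp [sml]; intro h; cases h
  | pre β F =>
    simp only [sml, List.mem_singleton]
    constructor
    · intro h; cases h; rfl
    · intro h
      obtain ⟨rfl, rfl⟩ : α = β ∧ E' = F := by
        injection h with h1 h2; exact ⟨h1, h2⟩
      exact step.pre _ _
  | plus E F ihE ihF =>
    simp only [sml, List.mem_append, ← ihE, ← ihF]
    constructor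
    · intro h; cases h with
      | left h => exact Or.inl h
      | right h => exact Or.inr h
    · rintro (h | h)
      · exact step.left h
      · exact step.right h

theorem sml_shape {E : NE Act} {x} (hx : x ∈ sml E) : ∃ β H, x = NE.pre β H := by
  induction E with
  | zero => cases hx
  | pre β F => simp only [sml, List.mem_singleton] at hx; exact ⟨β, F, hx⟩
  | plus E F ihE ihF =>
    rcases List.mem_append.1 hx with h | h
    · exact ihE h
    · exact ihF h

/-- Absorbing a summand. -/
theorem absorb_step {F : NE Act} {β H} (h : step F β H) :
    AXb τ (.plus F (.pre β H)) F := by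
  induction F with
  | zero => cases h
  | pre γ G => cases h; exact AXb.A3 _
  | plus F₁ F₂ ih1 ih2 =>
    cases h with
    | left h =>
      refine (AXb.A2 _ _ _).trans (((AXb.congPlusR (AXb.A1 _ _)).trans
        (AXb.symm (AXb.A2 _ _ _))).trans (AXb.congPlusL (ih1 h)))
    | right h =>
      exact (AXb.A2 _ _ _).trans (AXb.congPlusR (ih2 h))

theorem absorb_list {F : NE Act} {l : List (NE Act)}
    (h : ∀ x ∈ l, AXb τ (.plus F x) F) : AXb τ (.plus F (listSum l)) F := by
  induction l with
  | nil => exact AXb.A4 _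
  | cons x l ih =>
    exact (AXb.symm (AXb.A2 _ _ _)).trans
      ((AXb.congPlusL (h x List.mem_cons_self)).trans
        (ih fun y hy => h y (List.mem_cons_of_mem _ hy)))

theorem absorb_term {F E : NE Act} (h : ∀ x ∈ sml E, AXb τ (.plus F x) F) :
    AXb τ (.plus F E) F :=
  (AXb.congPlusR (sml_eq E)).trans (absorb_list h)

theorem listSum_perm {l₁ l₂ : List (NE Act)} (h : l₁.Perm l₂) :
    AXb τ (listSum l₁) (listSum l₂) := by
  induction h with
  | nil => exact AXb.refl _
  | cons x _ ih => exact AXb.congPlusR ih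
  | swap x y l =>
    exact (AXb.symm (AXb.A2 _ _ _)).trans
      ((AXb.congPlusL (AXb.A1 _ _)).trans (AXb.A2 _ _ _))
  | trans _ _ ih1 ih2 => exact ih1.trans ih2

theorem listSum_const {l : List (NE Act)} {t : NE Act} (hne : l ≠ [])
    (h : ∀ x ∈ l, AXb τ x t) : AXb τ (listSum l) t := by
  induction l with
  | nil => exact absurd rfl hne
  | cons x l ih =>
    rcases eq_or_ne l [] with rfl | hl
    · exact (AXb.A4 _).trans (h x List.mem_cons_self)
    · exact (AXb.plus_congr (h x List.mem_cons_self)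
        (ih hl fun y hy => h y (List.mem_cons_of_mem _ hy))).trans (AXb.A3 _)

theorem listSum_forall₂ {l l' : List (NE Act)} (h : List.Forall₂ (AXb τ) l l') :
    AXb τ (listSum l) (listSum l') := by
  induction h with
  | nil => exact AXb.refl _
  | cons h _ ih => exact AXb.plus_congr h ih

theorem forall₂_mem_right {R : NE Act → NE Act → Prop} {l l' : List (NE Act)}
    (h : List.Forall₂ R l l') : ∀ y ∈ l', ∃ x, R x y := by
  induction h with
  | nil => intro y hy; cases hy
  | cons h _ ih =>
    intro y hy
    rcases List.mem_cons.1 hy with rfl | hy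
    · exact ⟨_, h⟩
    · exact ih y hy

theorem list_choice {l : List (NE Act)} {R : NE Act → NE Act → Prop}
    (h : ∀ x ∈ l, ∃ y, R x y) : ∃ l', List.Forall₂ R l l' := by
  induction l with
  | nil => exact ⟨[], List.Forall₂.nil⟩
  | cons x l ih =>
    obtain ⟨l', hl'⟩ := ih fun y hy => h y (List.mem_cons_of_mem _ hy)
    obtain ⟨y, hy⟩ := h x List.mem_cons_self
    exact ⟨y :: l', List.Forall₂.cons hy hl'⟩

theorem sml_listSum {l : List (NE Act)} (h : ∀ y ∈ l, ∃ β K, y = NE.pre β K) :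
    sml (listSum l) = l := by
  induction l with
  | nil => rfl
  | cons y l ih =>
    obtain ⟨β, K, rfl⟩ := h y List.mem_cons_self
    simp only [listSum, sml, ih fun z hz => h z (List.mem_cons_of_mem _ hz)]
    rfl

theorem partition_exists {l : List (NE Act)} {P Q : NE Act → Prop}
    (h : ∀ x ∈ l, P x ∨ Q x) :
    ∃ l₁ l₂, l.Perm (l₁ ++ l₂) ∧ (∀ x ∈ l₁, P x) ∧ (∀ x ∈ l₂, Q x) := by
  induction l with
  | nil => exact ⟨[], [], List.Perm.refl _, by simp, by simp⟩
  | cons x l ih =>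
    obtain ⟨l₁, l₂, hp, h1, h2⟩ := ih fun y hy => h y (List.mem_cons_of_mem _ hy)
    rcases h x List.mem_cons_self with hP | hQ
    · refine ⟨x :: l₁, l₂, hp.cons x, ?_, h2⟩
      intro y hy
      rcases List.mem_cons.1 hy with rfl | hy
      · exact hP
      · exact h1 y hy
    · refine ⟨l₁, x :: l₂, (hp.cons x).trans List.perm_middle.symm, h1, ?_⟩
      intro y hy
      rcases List.mem_cons.1 hy with rfl | hy
      · exact hQ
      · exact h2 y hy

/-! #### Strong bisimilarity: completeness of A1–A4 -/

theorem sb_symm {E F : NE Act} (h : sb E F) : sb F E := by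
  obtain ⟨R, hR, hEF⟩ := h
  exact ⟨R, hR, hR.1 hEF⟩

theorem sb_step {E F : NE Act} {α E'} (h : sb E F) (hs : step E α E') :
    ∃ F', step F α F' ∧ sb E' F' := by
  obtain ⟨R, hR, hEF⟩ := h
  obtain ⟨F', h1, h2⟩ := hR.2 E F α E' hEF hs
  exact ⟨F', h1, R, hR, h2⟩

theorem sb_complete : ∀ n (E F : NE Act), size E + size F ≤ n → sb E F → AXb τ E F := by
  intro n
  induction n with
  | zero =>
    intro E F hn
    have := size_pos E; have := size_pos F; omega
  | succ n ih =>
    intro E F hn hsb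
    have key : ∀ (X Y : NE Act), size X + size Y ≤ n + 1 → sb X Y →
        AXb τ (.plus Y X) Y := by
      intro X Y hs hXY
      refine absorb_term fun x hx => ?_
      obtain ⟨β, H, rfl⟩ := sml_shape hx
      have hstep : step X β H := step_iff_mem.2 hx
      obtain ⟨F', hsF, hsb'⟩ := sb_step hXY hstep
      have hH : AXb τ H F' := by
        refine ih H F' ?_ hsb'
        have := step_size hstep; have := step_size hsF; omega
      exact (AXb.congPlusR (AXb.congPre β hH)).trans (absorb_step hsF)
    have h1 : AXb τ (.plus F E) F := key E F hn hsb
    have h2 : AXb τ (.plus E F) E := key F E (by omega) (sb_symm hsb)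
    exact h2.symm.trans ((AXb.A1 E F).trans h1)

/-! #### Soundness of the axioms for rooted branching bisimilarity -/

theorem rbb_refl (E : NE Act) : rbb τ E E :=
  ⟨fun _ E' h => ⟨E', h, bb_refl E'⟩, fun _ E' h => ⟨E', h, bb_refl E'⟩⟩

theorem rbb_symm {E F : NE Act} (h : rbb τ E F) : rbb τ F E :=
  ⟨fun α F' hs => by obtain ⟨E', h1, h2⟩ := h.2 α F' hs; exact ⟨E', h1, bb_symm h2⟩,
   fun α E' hs => by obtain ⟨F', h1, h2⟩ := h.1 α E' hs; exact ⟨F', h1, bb_symm h2⟩⟩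

theorem rbb_trans {E F G : NE Act} (h1 : rbb τ E F) (h2 : rbb τ F G) : rbb τ E G := by
  constructor
  · intro α E' hs
    obtain ⟨F', a1, a2⟩ := h1.1 α E' hs
    obtain ⟨G', b1, b2⟩ := h2.1 α F' a1
    exact ⟨G', b1, bb_trans a2 b2⟩
  · intro α G' hs
    obtain ⟨F', a1, a2⟩ := h2.2 α G' hs
    obtain ⟨E', b1, b2⟩ := h1.2 α F' a1
    exact ⟨E', b1, bb_trans b2 a2⟩

theorem rbb_bb {E F : NE Act} (h : rbb τ E F) : bb τ E F := by
  refine ⟨fun X Y => bb τ X Y ∨ (X = E ∧ Y = F) ∨ (X = F ∧ Y = E), ⟨?_, ?_⟩,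
    Or.inr (Or.inl ⟨rfl, rfl⟩)⟩
  · rintro X Y (hb | ⟨rfl, rfl⟩ | ⟨rfl, rfl⟩)
    · exact Or.inl (bb_symm hb)
    · exact Or.inr (Or.inr ⟨rfl, rfl⟩)
    · exact Or.inr (Or.inl ⟨rfl, rfl⟩)
  · rintro X Y α X' (hb | ⟨rfl, rfl⟩ | ⟨rfl, rfl⟩) hs
    · obtain ⟨F₁, F₂, a, b, c, d⟩ := bb_step hb hs
      exact ⟨F₁, F₂, a, b, Or.inl c, Or.inl d⟩
    · obtain ⟨F', h1, h2⟩ := h.1 α X' hs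
      exact ⟨_, F', Relation.ReflTransGen.refl, Or.inl h1,
        Or.inr (Or.inl ⟨rfl, rfl⟩), Or.inl h2⟩
    · obtain ⟨E', h1, h2⟩ := h.2 α X' hs
      exact ⟨_, E', Relation.ReflTransGen.refl, Or.inl h1,
        Or.inr (Or.inr ⟨rfl, rfl⟩), Or.inl (bb_symm h2)⟩

theorem rbb_same {A B : NE Act} (h : ∀ α X, step A α X ↔ step B α X) : rbb τ A B :=
  ⟨fun α X hs => ⟨X, (h α X).1 hs, bb_refl X⟩,
   fun α X hs => ⟨X, (h α X).2 hs, bb_refl X⟩⟩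

theorem sound_congPre {E F : NE Act} (α : Act) (h : rbb τ E F) :
    rbb τ (.pre α E) (.pre α F) := by
  constructor
  · intro β X hs; cases hs; exact ⟨F, step.pre _ _, rbb_bb h⟩
  · intro β X hs; cases hs; exact ⟨E, step.pre _ _, rbb_bb h⟩

theorem sound_congPlusL {E E' F : NE Act} (h : rbb τ E E') :
    rbb τ (.plus E F) (.plus E' F) := by
  constructor
  · intro α X hs
    cases hs with
    | left hs => obtain ⟨Y, h1, h2⟩ := h.1 α X hs; exact ⟨Y, step.left h1, h2⟩
    | right hs => exact ⟨X, step.right hs, bb_refl X⟩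
  · intro α X hs
    cases hs with
    | left hs => obtain ⟨Y, h1, h2⟩ := h.2 α X hs; exact ⟨Y, step.left h1, h2⟩
    | right hs => exact ⟨X, step.right hs, bb_refl X⟩

theorem sound_congPlusR {E F F' : NE Act} (h : rbb τ F F') :
    rbb τ (.plus E F) (.plus E F') := by
  constructor
  · intro α X hs
    cases hs with
    | left hs => exact ⟨X, step.left hs, bb_refl X⟩
    | right hs => obtain ⟨Y, h1, h2⟩ := h.1 α X hs; exact ⟨Y, step.right h1, h2⟩
  · intro α X hs
    cases hs with
    | left hs => exact ⟨X, step.left hs, bb_refl X⟩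
    | right hs => obtain ⟨Y, h1, h2⟩ := h.2 α X hs; exact ⟨Y, step.right h1, h2⟩

theorem sound_B (α : Act) (E F : NE Act) :
    rbb τ (.pre α (.plus F (.pre τ (.plus E F)))) (.pre α (.plus E F)) := by
  have hbbLR : bb τ (.plus F (.pre τ (.plus E F))) (.plus E F) := by
    refine ⟨fun X Y => X = Y ∨
        (X = NE.plus F (.pre τ (.plus E F)) ∧ Y = NE.plus E F) ∨
        (X = NE.plus E F ∧ Y = NE.plus F (.pre τ (.plus E F))), ⟨?_, ?_⟩,
      Or.inr (Or.inl ⟨rfl, rfl⟩)⟩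
    · rintro X Y (rfl | ⟨rfl, rfl⟩ | ⟨rfl, rfl⟩)
      · exact Or.inl rfl
      · exact Or.inr (Or.inr ⟨rfl, rfl⟩)
      · exact Or.inr (Or.inl ⟨rfl, rfl⟩)
    · rintro X Y β X' (rfl | ⟨rfl, rfl⟩ | ⟨rfl, rfl⟩) hs
      · exact ⟨X, X', Relation.ReflTransGen.refl, Or.inl hs, Or.inl rfl, Or.inl rfl⟩
      · -- steps of the left-hand side
        cases hs with
        | left hs =>
          exact ⟨.plus E F, X', Relation.ReflTransGen.refl, Or.inl (step.right hs),
            Or.inr (Or.inl ⟨rfl, rfl⟩), Or.inl rfl⟩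
        | right hs =>
          cases hs
          exact ⟨.plus E F, .plus E F, Relation.ReflTransGen.refl, Or.inr ⟨rfl, rfl⟩,
            Or.inr (Or.inl ⟨rfl, rfl⟩), Or.inl rfl⟩
      · -- steps of the right-hand side, matched after the inert τ-step
        have hw : wk τ (NE.plus F (.pre τ (.plus E F))) (.plus E F) :=
          Relation.ReflTransGen.single (Or.inl (step.right (step.pre τ (.plus E F))))
        exact ⟨.plus E F, X', hw, Or.inl hs, Or.inl rfl, Or.inl rfl⟩
  constructor
  · intro β X hs; cases hs; exact ⟨.plus E F, step.pre _ _, hbbLR⟩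
  · intro β X hs; cases hs
    exact ⟨.plus F (.pre τ (.plus E F)), step.pre _ _, hbbLR⟩

theorem soundness {E F : NE Act} (h : AXb τ E F) : rbb τ E F := by
  induction h with
  | refl E => exact rbb_refl E
  | symm _ ih => exact rbb_symm ih
  | trans _ _ ih1 ih2 => exact rbb_trans ih1 ih2
  | congPre α _ ih => exact sound_congPre α ih
  | congPlusL _ ih => exact sound_congPlusL ih
  | congPlusR _ ih => exact sound_congPlusR ih
  | A1 E F =>
    refine rbb_same fun α X => ⟨fun hs => ?_, fun hs => ?_⟩
    · cases hs with
      | left hs => exact step.right hs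
      | right hs => exact step.left hs
    · cases hs with
      | left hs => exact step.right hs
      | right hs => exact step.left hs
  | A2 E F G =>
    refine rbb_same fun α X => ⟨fun hs => ?_, fun hs => ?_⟩
    · cases hs with
      | left hs =>
        cases hs with
        | left hs => exact step.left hs
        | right hs => exact step.right (step.left hs)
      | right hs => exact step.right (step.right hs)
    · cases hs with
      | left hs => exact step.left (step.left hs)
      | right hs =>
        cases hs with
        | left hs => exact step.left (step.right hs)
        | right hs => exact step.right hs
  | A3 E =>
    refine rbb_same fun α X => ⟨fun hs => ?_, fun hs => step.left hs⟩
    cases hs with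
    | left hs => exact hs
    | right hs => exact hs
  | A4 E =>
    refine rbb_same fun α X => ⟨fun hs => ?_, fun hs => step.left hs⟩
    cases hs with
    | left hs => exact hs
    | right hs => cases hs
  | B α E F => exact sound_B α E F

/-! #### Normalization to concrete processes -/

/-- Under a prefix, every process is provably equal to a concrete one. -/
theorem normalize : ∀ n (G : NE Act), size G ≤ n →
    ∃ K, Concrete τ K ∧ ∀ α, AXb τ (.pre α G) (.pre α K) := by
  intro n
  induction n with
  | zero => intro G h; have := size_pos G; omega
  | succ n ih =>
    intro G hG
    -- first, normalize the bodies of all summands of `G`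
    have hch : ∀ x ∈ sml G, ∃ y,
        AXb τ x y ∧ ∃ β K, y = NE.pre β K ∧ Concrete τ K := by
      intro x hx
      obtain ⟨β, H, rfl⟩ := sml_shape hx
      have hstep : step G β H := step_iff_mem.2 hx
      obtain ⟨K, hKc, hK⟩ := ih H (by have := step_size hstep; omega)
      exact ⟨.pre β K, hK β, β, K, rfl, hKc⟩
    obtain ⟨l', hl'⟩ := list_choice hch
    have hshape : ∀ y ∈ l', ∃ β K, y = NE.pre β K ∧ Concrete τ K := by
      intro y hy
      obtain ⟨x, hR⟩ := forall₂_mem_right hl' y hy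
      exact hR.2
    have hsml : sml (listSum l') = l' := sml_listSum fun y hy => by
      obtain ⟨β, K, h, -⟩ := hshape y hy; exact ⟨β, K, h⟩
    have hGG' : AXb τ G (listSum l') :=
      (sml_eq G).trans (listSum_forall₂ (hl'.imp fun _ _ h => h.1))
    have hT : ∀ γ X, step (listSum l') γ X → Concrete τ X := by
      intro γ X hs
      have hmem : NE.pre γ X ∈ l' := by rw [← hsml]; exact step_iff_mem.1 hs
      obtain ⟨β, K, he, hc⟩ := hshape _ hmem
      obtain ⟨rfl, rfl⟩ : γ = β ∧ X = K := by injection he with a b; exact ⟨a, b⟩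
      exact hc
    by_cases hc : Concrete τ (listSum l')
    · exact ⟨listSum l', hc, fun α => AXb.congPre α hGG'⟩
    -- otherwise there is an inert τ-transition, necessarily at the root
    obtain ⟨K₀, hsK₀, hbbK₀⟩ : ∃ K₀, step (listSum l') τ K₀ ∧ bb τ (listSum l') K₀ := by
      simp only [Concrete] at hc
      push_neg at hc
      obtain ⟨X, hr, X', hs, hbb⟩ := hc
      rcases Relation.ReflTransGen.cases_head hr with rfl | ⟨c, ⟨γ, hstepc⟩, hrest⟩
      · exact ⟨X', hs, hbb⟩
      · exact absurd hbb
          (concrete_reach (hT γ c hstepc) hrest X Relation.ReflTransGen.refl X' hs)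
    have hK₀c : Concrete τ K₀ := hT τ K₀ hsK₀
    -- each summand of `G'` is either absorbed by `K₀` or provably equal to `τ.K₀`
    have hcases : ∀ x ∈ l', AXb τ (.plus K₀ x) K₀ ∨ AXb τ x (.pre τ K₀) := by
      intro x hx
      obtain ⟨β, H, rfl, hHc⟩ := hshape x hx
      have hstep : step (listSum l') β H := by
        apply step_iff_mem.2; rw [hsml]; exact hx
      obtain ⟨K₁, K₂, w, o, h1, h2⟩ := bb_step hbbK₀ hstep
      have hK₁ : K₁ = K₀ := wk_concrete_eq w h1 hK₀c hbbK₀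
      rw [hK₁] at o
      rcases o with hstepK | ⟨hβ, hK₂⟩
      · left
        have hHK : AXb τ H K₂ := sb_complete _ H K₂ le_rfl
          (bb_concrete_sb hHc (concrete_step hK₀c hstepK) h2)
        exact (AXb.congPlusR (AXb.congPre β hHK)).trans (absorb_step hstepK)
      · right
        rw [hβ]
        exact AXb.congPre τ
          (sb_complete _ H K₀ le_rfl (bb_concrete_sb hHc hK₀c (hK₂ ▸ h2)))
    classical
    have hx₀ : NE.pre τ K₀ ∈ l' := by rw [← hsml]; exact step_iff_mem.1 hsK₀
    obtain ⟨l₁, l₂', hperm', h1, h2⟩ :=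
      partition_exists (l := l'.erase (NE.pre τ K₀))
        (P := fun x => AXb τ (.plus K₀ x) K₀) (Q := fun x => AXb τ x (.pre τ K₀))
        (fun x hxe => hcases x (List.mem_of_mem_erase hxe))
    have hperm : l'.Perm (l₁ ++ (NE.pre τ K₀ :: l₂')) :=
      ((List.perm_cons_erase hx₀).trans (hperm'.cons _)).trans List.perm_middle.symm
    have hT2 : AXb τ (listSum (NE.pre τ K₀ :: l₂')) (.pre τ K₀) := by
      refine listSum_const (by simp) ?_
      intro x hx
      rcases List.mem_cons.1 hx with rfl | hx
      · exact AXb.refl _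
      · exact h2 x hx
    have habs : AXb τ (.plus K₀ (listSum l₁)) K₀ := absorb_list h1
    have hGdec : AXb τ (listSum l') (.plus (listSum l₁) (.pre τ K₀)) :=
      ((listSum_perm hperm).trans (listSum_append _ _)).trans (AXb.congPlusR hT2)
    refine ⟨K₀, hK₀c, fun α => ?_⟩
    have c1 : AXb τ (.pre α G) (.pre α (.plus (listSum l₁) (.pre τ K₀))) :=
      AXb.congPre α (hGG'.trans hGdec)
    have c2 : AXb τ (.pre α (.plus (listSum l₁) (.pre τ K₀)))
        (.pre α (.plus (listSum l₁) (.pre τ (.plus K₀ (listSum l₁))))) :=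
      AXb.congPre α (AXb.congPlusR (AXb.congPre τ habs.symm))
    have c3 : AXb τ (.pre α (.plus (listSum l₁) (.pre τ (.plus K₀ (listSum l₁)))))
        (.pre α (.plus K₀ (listSum l₁))) := AXb.B α K₀ (listSum l₁)
    exact ((c1.trans c2).trans c3).trans (AXb.congPre α habs)

/-- Every process is provably equal to one all of whose derivatives are concrete. -/
theorem rootNormalize (X : NE Act) :
    ∃ X', AXb τ X X' ∧ ∀ γ Y, step X' γ Y → Concrete τ Y := by
  have hch : ∀ x ∈ sml X, ∃ y,
      AXb τ x y ∧ ∃ β K, y = NE.pre β K ∧ Concrete τ K := by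
    intro x hx
    obtain ⟨β, H, rfl⟩ := sml_shape hx
    obtain ⟨K, hKc, hK⟩ := normalize (size H) H le_rfl
    exact ⟨.pre β K, hK β, β, K, rfl, hKc⟩
  obtain ⟨l', hl'⟩ := list_choice hch
  have hshape : ∀ y ∈ l', ∃ β K, y = NE.pre β K ∧ Concrete τ K := by
    intro y hy
    obtain ⟨x, hR⟩ := forall₂_mem_right hl' y hy
    exact hR.2
  have hsml : sml (listSum l') = l' := sml_listSum fun y hy => by
    obtain ⟨β, K, h, -⟩ := hshape y hy; exact ⟨β, K, h⟩
  refine ⟨listSum l', (sml_eq X).trans (listSum_forall₂ (hl'.imp fun _ _ h => h.1)), ?_⟩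
  intro γ Y hs
  have hmem : NE.pre γ Y ∈ l' := by rw [← hsml]; exact step_iff_mem.1 hs
  obtain ⟨β, K, he, hc⟩ := hshape _ hmem
  obtain ⟨rfl, rfl⟩ : γ = β ∧ Y = K := by injection he with a b; exact ⟨a, b⟩
  exact hc

/-- Completeness. -/
theorem completeness {E F : NE Act} (h : rbb τ E F) : AXb τ E F := by
  obtain ⟨E', hE1, hE2⟩ := rootNormalize E
  obtain ⟨F', hF1, hF2⟩ := rootNormalize F
  have hr : rbb τ E' F' :=
    rbb_trans (rbb_symm (soundness hE1)) (rbb_trans h (soundness hF1))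
  have key : ∀ X Y : NE Act, rbb τ X Y → (∀ γ Z, step X γ Z → Concrete τ Z) →
      (∀ γ Z, step Y γ Z → Concrete τ Z) → AXb τ (.plus Y X) Y := by
    intro X Y hXY hX hY
    refine absorb_term fun x hx => ?_
    obtain ⟨β, H, rfl⟩ := sml_shape hx
    have hstep : step X β H := step_iff_mem.2 hx
    obtain ⟨F₂, h1, h2⟩ := hXY.1 β H hstep
    have hHF : AXb τ H F₂ := sb_complete _ H F₂ le_rfl
      (bb_concrete_sb (hX _ _ hstep) (hY _ _ h1) h2)
    exact (AXb.congPlusR (AXb.congPre β hHF)).trans (absorb_step h1)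
  have h1 := key E' F' hr hE2 hF2
  have h2 := key F' E' (rbb_symm hr) hF2 hE2
  exact hE1.trans ((h2.symm.trans ((AXb.A1 _ _).trans h1)).trans hF1.symm)

end Aux

/-- Soundness and completeness of `AX^b` for rooted branching bisimilarity. -/
theorem statement11 {Act : Type} (τ : Act) (E F : NE Act) :
    rbb τ E F ↔ AXb τ E F :=
  ⟨completeness, soundness⟩

end NDB
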